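/- Let Σ_ηη be symmetric positive definite, Σ_γγ symmetric positive semidefinite with nonnegative entries, Σ_ηθ ∈ ℝ^k, and b, λ satisfy the scoring first-order condition Σ_ηη b + 2·diag(b)Σ_γγ(b∘b) = λΣ_ηθ together with the obedience constraint bᵀΣ_ηη b + (b∘b)ᵀΣ_γγ(b∘b) = bᵀΣ_ηθ, with bᵀΣ_ηθ > 0. Then 1 ≤ λ < 2. -/

import Mathlib

open Matrix

/-- the Lagrange multiplier in the scoring first-order condition lies in `[1,2)`. -/
theorem scoring_multiplier_bounds {k : ℕ} (Sηη Sγγ : Matrix (Fin k) (Fin k) ℝ)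
    (Sηθ : Fin k → ℝ) (hηη : Sηη.PosDef) (hγγ : Sγγ.PosSemidef)
    (hnn : ∀ i j, 0 ≤ Sγγ i j) (b : Fin k → ℝ) (l : ℝ)
    (hFOC : Sηη *ᵥ b + (2 : ℝ) • (Matrix.diagonal b *ᵥ (Sγγ *ᵥ (b * b))) = l • Sηθ)
    (hobed : b ⬝ᵥ (Sηη *ᵥ b) + (b * b) ⬝ᵥ (Sγγ *ᵥ (b * b)) = b ⬝ᵥ Sηθ)
    (hpos : 0 < b ⬝ᵥ Sηθ) :
    1 ≤ l ∧ l < 2 := by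
  have hb : b ≠ 0 := by rintro rfl; simp at hpos
  have hA : 0 < b ⬝ᵥ (Sηη *ᵥ b) := by
    have := hηη.dotProduct_mulVec_pos hb
    simpa using this
  have hB : 0 ≤ (b * b) ⬝ᵥ (Sγγ *ᵥ (b * b)) := by
    have := hγγ.dotProduct_mulVec_nonneg (b * b)
    simpa using this
  have hdiag : b ⬝ᵥ (Matrix.diagonal b *ᵥ (Sγγ *ᵥ (b * b)))
      = (b * b) ⬝ᵥ (Sγγ *ᵥ (b * b)) := by
    simp only [dotProduct, mulVec_diagonal, Pi.mul_apply]
    exact Finset.sum_congr rfl fun i _ => by ring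
  have hdot := congrArg (fun v => b ⬝ᵥ v) hFOC
  simp only [dotProduct_add, dotProduct_smul, smul_eq_mul, hdiag] at hdot
  set A := b ⬝ᵥ (Sηη *ᵥ b) with hAdef
  set B := (b * b) ⬝ᵥ (Sγγ *ᵥ (b * b)) with hBdef
  set S := b ⬝ᵥ Sηθ with hSdef
  constructor
  · nlinarith
  · nlinarith
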